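/- Let (𝔛, !𝔅, *ℭ, !*ℌ) be an affine fan quadruple with 𝔛 induced by a cone τ. Suppose there is a set 𝔈 of rays of 𝔛 such that 𝔛 is 𝔈-simplicial and τ = Cone(ξ, 𝔈) for some face ξ of τ with dim ξ = dim τ − |𝔈|. Then (𝔛, !𝔅, *ℭ, !*ℌ) is (𝔅♯, ℭ♭, ℌ♯)-sorted if and only if the restricted affine quadruple on the faces of ξ is (𝔅♯ ∩ faces of ξ, ℭ♭ ∩ faces of ξ, ℌ♯ ∩ faces of ξ)-sorted. -/

import Mathlib

namespace ToricPaper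

open scoped BigOperators

/-- The ambient space `N_ℚ = ℚ^n`. -/
abbrev V (n : ℕ) := Fin n → ℚ

variable {n : ℕ}

/-- The cone of nonnegative rational combinations of elements of `A`. -/
def coneHull (A : Set (V n)) : Set (V n) :=
  {x | ∃ t : Finset (V n), ↑t ⊆ A ∧ ∃ c : V n → ℚ,
    (∀ v ∈ t, 0 ≤ c v) ∧ x = ∑ v ∈ t, c v • v}

/-- A rational polyhedral cone: the cone generated by finitely many vectors. -/
def IsPolyCone (σ : Set (V n)) : Prop := ∃ S : Finset (V n), σ = coneHull (S : Set (V n))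

/-- A cone is strongly convex if it contains no line. -/
def StronglyConvex (σ : Set (V n)) : Prop := ∀ x ∈ σ, -x ∈ σ → x = 0

/-- `F` is a face of `σ`, cut out by a linear functional nonnegative on `σ`. -/
def IsFaceOf (F σ : Set (V n)) : Prop :=
  ∃ m : (V n) →ₗ[ℚ] ℚ, (∀ x ∈ σ, 0 ≤ m x) ∧ F = {x ∈ σ | m x = 0}

/-- Dimension of a cone: the rank of its linear span. -/
noncomputable def coneDim (σ : Set (V n)) : ℕ := Module.finrank ℚ (Submodule.span ℚ σ)

/-- A ray of a cone is a one-dimensional face. -/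
def IsRayOf (ν σ : Set (V n)) : Prop := IsFaceOf ν σ ∧ coneDim ν = 1

/-- An abstract ray: a one-dimensional strongly convex rational polyhedral cone. -/
def IsRay (ν : Set (V n)) : Prop := IsPolyCone ν ∧ StronglyConvex ν ∧ coneDim ν = 1

/-- All faces of a cone `τ` (the affine fan induced by `τ`). -/
def faces (τ : Set (V n)) : Set (Set (V n)) := {F | IsFaceOf F τ}

/-- The rays of a cone `τ`. -/
def raysOf (τ : Set (V n)) : Set (Set (V n)) := {ν | IsRayOf ν τ}

/-- A fan: a finite collection of strongly convex rational polyhedral cones, closed under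
taking faces, such that the intersection of two cones is a face of each. -/
def IsFan (X : Set (Set (V n))) : Prop :=
  X.Finite ∧ (∀ σ ∈ X, IsPolyCone σ ∧ StronglyConvex σ) ∧
  (∀ σ ∈ X, ∀ F, IsFaceOf F σ → F ∈ X) ∧
  (∀ σ ∈ X, ∀ σ' ∈ X, IsFaceOf (σ ∩ σ') σ ∧ IsFaceOf (σ ∩ σ') σ')

/-- The rays (one-dimensional cones) belonging to a collection of cones. -/
def raysIn (X : Set (Set (V n))) : Set (Set (V n)) := {ν | ν ∈ X ∧ coneDim ν = 1}

/-- The support of a collection of cones. -/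
def support (X : Set (Set (V n))) : Set (V n) := ⋃₀ X

/-- The data of a fan quadruple `(X, !B, *C, !*H)`: three pairwise disjoint sets of rays. -/
def IsQuadData (X B C H : Set (Set (V n))) : Prop :=
  B ⊆ raysIn X ∧ C ⊆ raysIn X ∧ H ⊆ raysIn X ∧ Disjoint B C ∧ Disjoint B H ∧ Disjoint C H

/-- The data of a fan triple `(X, !B, *C)`: two disjoint sets of rays. -/
def IsTripleData (X B C : Set (Set (V n))) : Prop :=
  B ⊆ raysIn X ∧ C ⊆ raysIn X ∧ Disjoint B C

/-- `ρ` is a sorting function for the (restricted) quadruple on the faces of `ξ`: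
nonnegative on rays of `ξ` in `B`, nonpositive on rays of `ξ` in `C`, zero on rays of `ξ`
in none of `B`, `C`, `H`. -/
def IsSortingOn (ξ : Set (V n)) (B C H : Set (Set (V n))) (ρ : (V n) →ₗ[ℚ] ℚ) : Prop :=
  (∀ ν, IsRayOf ν ξ → ν ∈ B → ∀ x ∈ ν, 0 ≤ ρ x) ∧
  (∀ ν, IsRayOf ν ξ → ν ∈ C → ∀ x ∈ ν, ρ x ≤ 0) ∧
  (∀ ν, IsRayOf ν ξ → ν ∉ B → ν ∉ C → ν ∉ H → ∀ x ∈ ν, ρ x = 0)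

/-- The (restricted) affine quadruple on the faces of `ξ` admits a `Cf`-strict sorting
function: a sorting function which is moreover negative on `ν ∖ {0}` for every `ν ∈ Cf`. -/
def HasStrictSortingOn (ξ : Set (V n)) (B C H Cf : Set (Set (V n))) : Prop :=
  ∃ ρ : (V n) →ₗ[ℚ] ℚ, IsSortingOn ξ B C H ρ ∧
    ∀ ν, IsRayOf ν ξ → ν ∈ Cf → ∀ x ∈ ν, x ≠ 0 → ρ x < 0

/-- A cone `ξ` is `E`-unsettled if no ray of `ξ` lies in `E`. -/
def Unsettled (E : Set (Set (V n))) (ξ : Set (V n)) : Prop := ∀ ν, IsRayOf ν ξ → ν ∉ E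

/-- The quadruple `(X, !B, *C, !*H)` is `(Bs, Cf, Hs)`-sorted. -/
def SortedOn (X B C H Bs Cf Hs : Set (Set (V n))) : Prop :=
  ∀ ξ ∈ X, Unsettled ((B \ Bs) ∪ (H \ Hs)) ξ → HasStrictSortingOn ξ B C H Cf

/-- Partially-sorted: `(∅, C, ∅)`-sorted. -/
def PartiallySortedOn (X B C H : Set (Set (V n))) : Prop := SortedOn X B C H ∅ C ∅

/-- Well-sorted: `(B, C, H)`-sorted. -/
def WellSortedOn (X B C H : Set (Set (V n))) : Prop := SortedOn X B C H B C H

/-- A simplicial cone is generated by linearly independent vectors. -/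
def IsSimplicialCone (σ : Set (V n)) : Prop :=
  ∃ S : Finset (V n), LinearIndependent ℚ (fun v : S => (v : V n)) ∧
    σ = coneHull (S : Set (V n))

/-- A collection of cones is `E`-simplicial: every cone having a ray of `E` as a face is the
join of that ray with a cone of the collection of one less dimension. -/
def ESimplicialOn (X E : Set (Set (V n))) : Prop :=
  ∀ ν ∈ E, ∀ σ ∈ X, IsFaceOf ν σ →
    ∃ ζ ∈ X, σ = coneHull (ζ ∪ ν) ∧ coneDim σ = coneDim ζ + 1

/-- A subdivision of a fan: a fan with the same support, every cone of which is contained in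
a cone of the base. -/
def IsSubdivision (X' X : Set (Set (V n))) : Prop :=
  IsFan X' ∧ support X' = support X ∧ ∀ σ' ∈ X', ∃ σ ∈ X, σ' ⊆ σ

/-- A subdivision is efficient if it introduces no new rays. -/
def IsEfficient (X' X : Set (Set (V n))) : Prop := raysIn X' = raysIn X

/-- `ψ` is a good (convex piecewise-linear) function for the subdivision `X'` relative to the
cones of the base fan `X`: on each cone `τ` of `X`, `ψ` is convex, linear on each cone of
`X'` contained in `τ`, and the maximal subcones of linearity of `ψ` inside `τ` are exactly
the cones of `X'` (i.e. any convex subset of `τ` on which `ψ` is linear lies in one of them). -/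
def IsGoodFor (X X' : Set (Set (V n))) (ψ : V n → ℚ) : Prop :=
  ∀ τ ∈ X, ConvexOn ℚ τ ψ ∧
    (∀ σ' ∈ X', σ' ⊆ τ → ∃ m : (V n) →ₗ[ℚ] ℚ, ∀ x ∈ σ', ψ x = m x) ∧
    (∀ (m : (V n) →ₗ[ℚ] ℚ) (t : Set (V n)), t ⊆ τ → Convex ℚ t →
      (∀ x ∈ t, ψ x = m x) → ∃ σ' ∈ X', σ' ⊆ τ ∧ t ⊆ σ')

/-- Sign conditions of a good sorting function with respect to the quadruple data on `X'`. -/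
def SignedOn (X' B' C' H' : Set (Set (V n))) (ψ : V n → ℚ) : Prop :=
  (∀ ν ∈ B', ∀ x ∈ ν, 0 ≤ ψ x) ∧ (∀ ν ∈ C', ∀ x ∈ ν, ψ x ≤ 0) ∧
  (∀ ν ∈ raysIn X', ν ∉ B' → ν ∉ C' → ν ∉ H' → ∀ x ∈ ν, ψ x = 0)

/-- Sign conditions restricted to the rays contained in a cone `τ`. -/
def SignedOnIn (τ : Set (V n)) (X' B' C' H' : Set (Set (V n))) (ψ : V n → ℚ) : Prop :=
  (∀ ν ∈ B', ν ⊆ τ → ∀ x ∈ ν, 0 ≤ ψ x) ∧ (∀ ν ∈ C', ν ⊆ τ → ∀ x ∈ ν, ψ x ≤ 0) ∧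
  (∀ ν ∈ raysIn X', ν ⊆ τ → ν ∉ B' → ν ∉ C' → ν ∉ H' → ∀ x ∈ ν, ψ x = 0)

/-- A convex subdivision, with respect to a fan quadruple structure on `X'`. -/
def IsConvexSubdiv (X' X B' C' H' : Set (Set (V n))) : Prop :=
  IsSubdivision X' X ∧ ∃ ψ : V n → ℚ, IsGoodFor X X' ψ ∧ SignedOn X' B' C' H' ψ

/-- A locally-convex subdivision: for each cone of the base there is a good sorting function
on that cone. -/
def IsLocallyConvexSubdiv (X' X B' C' H' : Set (Set (V n))) : Prop :=
  IsSubdivision X' X ∧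
    ∀ τ ∈ X, ∃ ψ : V n → ℚ, IsGoodFor {τ} X' ψ ∧ SignedOnIn τ X' B' C' H' ψ

/-- Star subdivision of `X` at a ray `ν` contained in the support of `X`. -/
def starSubdiv (X : Set (Set (V n))) (ν : Set (V n)) : Set (Set (V n)) :=
  {σ | σ ∈ X ∧ ¬ ν ⊆ σ} ∪
  {τ | ∃ σ ∈ X, ν ⊆ σ ∧ ∃ ξ, IsFaceOf ξ σ ∧ ¬ ν ⊆ ξ ∧ τ = coneHull (ξ ∪ ν)}

/-- The set `S` of facets used in the extension construction `Ext(𝔗, ν)`. -/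
noncomputable def extS (τ ν : Set (V n)) : Set (Set (V n)) :=
  if coneDim (coneHull (τ ∪ ν)) = coneDim τ + 1 then {τ}
  else {ζ | (IsFaceOf ζ τ ∧ coneDim ζ + 1 = coneDim τ) ∧
    ∃ m : (V n) →ₗ[ℚ] ℚ, (∀ x ∈ ζ, m x = 0) ∧ (∃ v ∈ ν, v ≠ 0 ∧ m v = -1) ∧
      ∀ x ∈ τ, x ∉ ζ → 0 < m x}

/-- All faces of cones of `extS τ ν`. -/
noncomputable def extFaces (τ ν : Set (V n)) : Set (Set (V n)) :=
  {ξ | ∃ ζ ∈ extS τ ν, IsFaceOf ξ ζ}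

/-- The extension `Ext(𝔗, ν)` of the affine fan of `τ` by the ray `ν`. -/
noncomputable def Ext (τ ν : Set (V n)) : Set (Set (V n)) :=
  {ν} ∪ faces τ ∪ (fun ξ => coneHull (ξ ∪ ν)) '' extFaces τ ν

/-- The extension `Ext(𝔗', ν)` of a subdivision `𝒯'` of the affine fan of `τ` by the ray
`ν`. -/
noncomputable def ExtSub (T' : Set (Set (V n))) (τ ν : Set (V n)) : Set (Set (V n)) :=
  {ν} ∪ T' ∪ (fun ξ => coneHull (ξ ∪ ν)) ''
    {ξ | ∃ ζ' ∈ T', (∃ ζ ∈ extS τ ν, ζ' ⊆ ζ) ∧ IsFaceOf ξ ζ'}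

/-- Sequential convexity of a sequence of star subdivisions (the list gives the rays in the
order in which the star subdivisions are performed). -/
def SeqConvex (B C H : Set (Set (V n))) : Set (Set (V n)) → List (Set (V n)) → Prop
  | _, [] => True
  | X, ν :: rest =>
      IsLocallyConvexSubdiv (starSubdiv X ν) X B C H ∧
      SeqConvex B C H (starSubdiv X ν) rest

section Aux

open Module Submodule

variable {n : ℕ}

lemma mem_coneHull_self {A : Set (V n)} {v : V n} (h : v ∈ A) : v ∈ coneHull A :=
  ⟨{v}, by simpa using h, fun _ => 1, fun _ _ => zero_le_one, by simp⟩

lemma zero_mem_coneHull (A : Set (V n)) : (0 : V n) ∈ coneHull A :=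
  ⟨∅, by simp, fun _ => 0, fun _ h => by simp at h, by simp⟩

lemma smul_mem_coneHull {A : Set (V n)} {x : V n} (hx : x ∈ coneHull A) {t : ℚ} (ht : 0 ≤ t) :
    t • x ∈ coneHull A := by
  obtain ⟨s, hs, c, hc, rfl⟩ := hx
  refine ⟨s, hs, fun v => t * c v, fun v hv => mul_nonneg ht (hc v hv), ?_⟩
  rw [Finset.smul_sum]
  exact Finset.sum_congr rfl fun v _ => (mul_smul _ _ _).symm

lemma add_mem_coneHull {A : Set (V n)} {x y : V n} (hx : x ∈ coneHull A)
    (hy : y ∈ coneHull A) : x + y ∈ coneHull A := by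
  classical
  obtain ⟨s, hs, c, hc, rfl⟩ := hx
  obtain ⟨s', hs', c', hc', rfl⟩ := hy
  refine ⟨s ∪ s', by rw [Finset.coe_union]; exact Set.union_subset hs hs',
    fun v => (if v ∈ s then c v else 0) + (if v ∈ s' then c' v else 0), ?_, ?_⟩
  · intro v _
    refine add_nonneg ?_ ?_ <;> split_ifs with h
    · exact hc v h
    · exact le_rfl
    · exact hc' v h
    · exact le_rfl
  · have h1 : ∑ v ∈ s ∪ s', (if v ∈ s then c v else 0) • v = ∑ v ∈ s, c v • v := by
      rw [← Finset.sum_subset Finset.subset_union_left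
        (fun v _ hvn => by rw [if_neg hvn, zero_smul])]
      exact Finset.sum_congr rfl fun v hv => by rw [if_pos hv]
    have h2 : ∑ v ∈ s ∪ s', (if v ∈ s' then c' v else 0) • v = ∑ v ∈ s', c' v • v := by
      rw [← Finset.sum_subset Finset.subset_union_right
        (fun v _ hvn => by rw [if_neg hvn, zero_smul])]
      exact Finset.sum_congr rfl fun v hv => by rw [if_pos hv]
    rw [← h1, ← h2, ← Finset.sum_add_distrib]
    exact Finset.sum_congr rfl fun v _ => (add_smul _ _ _).symm

lemma sum_mem_coneHull {A : Set (V n)} {ι : Type*} {s : Finset ι} {f : ι → V n}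
    (h : ∀ i ∈ s, f i ∈ coneHull A) : ∑ i ∈ s, f i ∈ coneHull A := by
  classical
  induction s using Finset.induction with
  | empty => simpa using zero_mem_coneHull A
  | insert a s hnot ih =>
    rw [Finset.sum_insert hnot]
    exact add_mem_coneHull (h _ (Finset.mem_insert_self _ _))
      (ih fun i hi => h i (Finset.mem_insert_of_mem hi))

lemma coneHull_mono {A A' : Set (V n)} (h : A ⊆ A') : coneHull A ⊆ coneHull A' := by
  rintro x ⟨s, hs, c, hc, rfl⟩
  exact ⟨s, hs.trans h, c, hc, rfl⟩

lemma coneHull_subset {A B : Set (V n)} (h : A ⊆ coneHull B) :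
    coneHull A ⊆ coneHull B := by
  rintro x ⟨s, hs, c, hc, rfl⟩
  exact sum_mem_coneHull fun v hv => smul_mem_coneHull (h (hs hv)) (hc v hv)

lemma coneHull_eval_nonneg {A : Set (V n)} (φ : (V n) →ₗ[ℚ] ℚ) (h : ∀ v ∈ A, 0 ≤ φ v)
    {x : V n} (hx : x ∈ coneHull A) : 0 ≤ φ x := by
  obtain ⟨s, hs, c, hc, rfl⟩ := hx
  rw [map_sum]
  exact Finset.sum_nonneg fun v hv => by
    rw [map_smul, smul_eq_mul]; exact mul_nonneg (hc v hv) (h v (hs hv))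

lemma coneHull_eval_eq_zero {A : Set (V n)} (φ : (V n) →ₗ[ℚ] ℚ) (h : ∀ v ∈ A, φ v = 0)
    {x : V n} (hx : x ∈ coneHull A) : φ x = 0 := by
  obtain ⟨s, hs, c, hc, rfl⟩ := hx
  rw [map_sum]
  exact Finset.sum_eq_zero fun v hv => by
    rw [map_smul, smul_eq_mul, h v (hs hv), mul_zero]

lemma mem_coneHull_zeroSet {A : Set (V n)} (φ : (V n) →ₗ[ℚ] ℚ) (h : ∀ v ∈ A, 0 ≤ φ v)
    {x : V n} (hx : x ∈ coneHull A) (hx0 : φ x = 0) :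
    x ∈ coneHull {v ∈ A | φ v = 0} := by
  classical
  obtain ⟨s, hs, c, hc, rfl⟩ := hx
  have hx0' : ∑ v ∈ s, c v * φ v = 0 := by
    simpa [map_sum, map_smul, smul_eq_mul] using hx0
  have hterm : ∀ v ∈ s, c v * φ v = 0 :=
    (Finset.sum_eq_zero_iff_of_nonneg
      (fun v hv => mul_nonneg (hc v hv) (h v (hs hv)))).mp hx0'
  refine ⟨s.filter (fun v => φ v = 0), ?_, c,
    fun v hv => hc v (Finset.mem_filter.mp hv).1, ?_⟩
  · intro v hv
    rw [Finset.coe_filter] at hv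
    exact ⟨hs hv.1, hv.2⟩
  · rw [Finset.sum_filter_of_ne]
    intro v hv hne
    by_contra hφ
    have hcv : c v = 0 := by
      rcases mul_eq_zero.mp (hterm v hv) with h' | h'
      · exact h'
      · exact absurd h' hφ
    rw [hcv, zero_smul] at hne
    exact hne rfl

lemma coneHull_subset_span (A : Set (V n)) :
    coneHull A ⊆ (Submodule.span ℚ A : Submodule ℚ (V n)) := by
  rintro x ⟨s, hs, c, hc, rfl⟩
  exact Submodule.sum_mem _ fun v hv => Submodule.smul_mem _ _ (Submodule.subset_span (hs hv))

lemma span_coneHull (A : Set (V n)) :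
    Submodule.span ℚ (coneHull A) = Submodule.span ℚ A :=
  le_antisymm (Submodule.span_le.mpr (coneHull_subset_span A))
    (Submodule.span_mono fun v hv => mem_coneHull_self hv)

lemma face_coneHull_eq {A : Set (V n)} {m : (V n) →ₗ[ℚ] ℚ}
    (hm : ∀ x ∈ coneHull A, 0 ≤ m x) :
    {x ∈ coneHull A | m x = 0} = coneHull {v ∈ A | m v = 0} := by
  ext x
  constructor
  · rintro ⟨hx, hx0⟩
    exact mem_coneHull_zeroSet m (fun v hv => hm v (mem_coneHull_self hv)) hx hx0
  · intro hx
    exact ⟨coneHull_mono (fun v hv => hv.1) hx,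
      coneHull_eval_eq_zero m (fun v hv => hv.2) hx⟩

lemma IsFaceOf.subset {F σ : Set (V n)} (h : IsFaceOf F σ) : F ⊆ σ := by
  obtain ⟨m, _, rfl⟩ := h
  exact fun x hx => hx.1

lemma IsFaceOf.isPolyCone {F σ : Set (V n)} (h : IsFaceOf F σ) (hσ : IsPolyCone σ) :
    IsPolyCone F := by
  classical
  obtain ⟨S, rfl⟩ := hσ
  obtain ⟨m, hm, rfl⟩ := h
  refine ⟨S.filter (fun v => m v = 0), ?_⟩
  rw [face_coneHull_eq hm]
  congr 1
  ext v
  simp [Finset.coe_filter]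

lemma IsFaceOf.trans {ν σ τ : Set (V n)} (hτ : IsPolyCone τ)
    (h1 : IsFaceOf ν σ) (h2 : IsFaceOf σ τ) : IsFaceOf ν τ := by
  classical
  obtain ⟨S, rfl⟩ := hτ
  obtain ⟨m', hm', hσ⟩ := h2
  obtain ⟨m, hm, hν⟩ := h1
  obtain ⟨N, hN⟩ : ∃ N : ℚ, ∀ v ∈ S, 0 < m' v → 0 < m v + N * m' v := by
    have hfin : (Set.range (fun v : S => -(m v) / m' v)).Finite := Set.finite_range _
    obtain ⟨N0, hN0⟩ := hfin.bddAbove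
    refine ⟨N0 + 1, fun v hv hv' => ?_⟩
    have h1 : -(m v) / m' v ≤ N0 := hN0 ⟨⟨v, hv⟩, rfl⟩
    have h2 : -(m v) / m' v < N0 + 1 := lt_of_le_of_lt h1 (lt_add_one N0)
    have h3 := (div_lt_iff₀ hv').mp h2
    linarith
  set ρ : (V n) →ₗ[ℚ] ℚ := m + N • m' with hρdef
  have hρval : ∀ x, ρ x = m x + N * m' x := fun x => by
    simp [hρdef, smul_eq_mul]
  have hgen : ∀ v ∈ (S : Set (V n)), 0 ≤ ρ v ∧ (ρ v = 0 → m' v = 0 ∧ m v = 0) := by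
    intro v hv
    have hvτ : v ∈ coneHull (S : Set (V n)) := mem_coneHull_self hv
    have hm'v : 0 ≤ m' v := hm' v hvτ
    rcases eq_or_lt_of_le hm'v with h0 | h0
    · have hvσ : v ∈ σ := by rw [hσ]; exact ⟨hvτ, h0.symm⟩
      have hmv : 0 ≤ m v := hm v hvσ
      constructor
      · rw [hρval]; rw [← h0]; simpa using hmv
      · intro h'; rw [hρval, ← h0] at h'; constructor
        · exact h0.symm
        · linarith
    · have := hN v (by exact_mod_cast hv) h0
      constructor
      · rw [hρval]; linarith
      · intro h'; rw [hρval] at h'; exfalso; linarith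
  refine ⟨ρ, fun x hx => coneHull_eval_nonneg ρ (fun v hv => (hgen v hv).1) hx, ?_⟩
  ext x
  constructor
  · intro hx
    have hxσ : x ∈ σ := by rw [hν] at hx; exact hx.1
    have hxm : m x = 0 := by rw [hν] at hx; exact hx.2
    have hxτ : x ∈ coneHull (S : Set (V n)) := by rw [hσ] at hxσ; exact hxσ.1
    have hxm' : m' x = 0 := by rw [hσ] at hxσ; exact hxσ.2
    exact ⟨hxτ, by rw [hρval, hxm, hxm']; ring⟩
  · rintro ⟨hxτ, hx0⟩
    have hx' : x ∈ coneHull {v ∈ (S : Set (V n)) | ρ v = 0} :=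
      mem_coneHull_zeroSet ρ (fun v hv => (hgen v hv).1) hxτ hx0
    have hxm' : m' x = 0 :=
      coneHull_eval_eq_zero m' (fun v hv => ((hgen v hv.1).2 hv.2).1) hx'
    have hxm : m x = 0 :=
      coneHull_eval_eq_zero m (fun v hv => ((hgen v hv.1).2 hv.2).2) hx'
    have hxσ : x ∈ σ := by rw [hσ]; exact ⟨hxτ, hxm'⟩
    rw [hν]; exact ⟨hxσ, hxm⟩

/-- The ray generated by a vector. -/
def raySet (u : V n) : Set (V n) := {x | ∃ t : ℚ, 0 ≤ t ∧ x = t • u}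

lemma raySet_smul {u : V n} {t : ℚ} (ht : 0 < t) : raySet (t • u) = raySet u := by
  ext x
  constructor
  · rintro ⟨s, hs, rfl⟩
    exact ⟨s * t, mul_nonneg hs ht.le, by rw [smul_smul]⟩
  · rintro ⟨s, hs, rfl⟩
    exact ⟨s / t, div_nonneg hs ht.le, by rw [smul_smul, div_mul_cancel₀ _ ht.ne']⟩

lemma exists_ne_zero_of_coneDim_ne_zero {ν : Set (V n)} (h : coneDim ν ≠ 0) :
    ∃ u, u ∈ ν ∧ u ≠ 0 := by
  by_contra hc
  push_neg at hc
  have hle : Submodule.span ℚ ν ≤ ⊥ := Submodule.span_le.mpr fun x hx => by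
    simp [hc x hx]
  apply h
  have hspan : Submodule.span ℚ ν = ⊥ := le_bot_iff.mp hle
  rw [coneDim, hspan]
  exact finrank_bot ℚ (V n)

lemma ray_eq_raySet {τ ν : Set (V n)} (hτ : IsPolyCone τ) (hsc : StronglyConvex τ)
    (hface : IsFaceOf ν τ) (hdim : coneDim ν = 1) {u : V n} (hu : u ∈ ν) (hne : u ≠ 0) :
    ν = raySet u := by
  obtain ⟨S, hS⟩ := hτ
  obtain ⟨m, hm, hνeq⟩ := hface
  have hsmul : ∀ {t : ℚ}, 0 ≤ t → ∀ {x}, x ∈ ν → t • x ∈ ν := by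
    intro t ht x hx
    rw [hνeq] at hx ⊢
    constructor
    · rw [hS] at hx ⊢
      exact smul_mem_coneHull hx.1 ht
    · rw [map_smul, smul_eq_mul, hx.2, mul_zero]
  have hsub : ν ⊆ τ := by rw [hνeq]; exact fun x hx => hx.1
  have hspan : Submodule.span ℚ ν = Submodule.span ℚ ({u} : Set (V n)) := by
    refine (Submodule.eq_of_le_of_finrank_le
      (Submodule.span_mono (by simpa using hu)) ?_).symm
    rw [show Module.finrank ℚ (Submodule.span ℚ ν) = 1 from hdim]
    have h1 : Module.finrank ℚ (Submodule.span ℚ ({u} : Set (V n))) = 1 :=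
      finrank_span_singleton hne
    omega
  ext x
  constructor
  · intro hx
    have hxs : x ∈ Submodule.span ℚ ({u} : Set (V n)) := by
      rw [← hspan]; exact Submodule.subset_span hx
    obtain ⟨t, rfl⟩ := Submodule.mem_span_singleton.mp hxs
    rcases le_or_gt 0 t with ht | ht
    · exact ⟨t, ht, rfl⟩
    · exfalso
      have hneg : (-t) • u ∈ ν := hsmul (by linarith) hu
      have hzero : t • u = 0 := hsc _ (hsub hx) (by rw [← neg_smul]; exact hsub hneg)
      rcases smul_eq_zero.mp hzero with h' | h'
      · exact absurd h' ht.ne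
      · exact hne h'
  · rintro ⟨t, ht, rfl⟩
    exact hsmul ht hu

lemma coneHull_zero_subset {A : Set (V n)} (h : ∀ v ∈ A, v = 0) :
    coneHull A ⊆ {0} := by
  rintro x ⟨s, hs, c, hc, rfl⟩
  simp only [Set.mem_singleton_iff]
  exact Finset.sum_eq_zero fun v hv => by rw [h v (hs hv), smul_zero]

lemma ray_cases {τ ξ : Set (V n)} {E : Set (Set (V n))}
    (hτ : IsPolyCone τ) (hsc : StronglyConvex τ)
    (hξ : IsFaceOf ξ τ) (hgen : τ = coneHull (ξ ∪ ⋃₀ E))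
    (hE : ∀ e ∈ E, ∃ w, w ∈ e ∧ w ≠ 0 ∧ e = raySet w)
    {ν : Set (V n)} (hν : IsRayOf ν τ) : IsFaceOf ν ξ ∨ ν ∈ E := by
  obtain ⟨⟨m, hm, hνeq⟩, hdim⟩ := hν
  set A := ξ ∪ ⋃₀ E with hA
  have hmA : ∀ x ∈ coneHull A, 0 ≤ m x := fun x hx => hm x (by rw [hgen]; exact hx)
  have hν2 : ν = coneHull {v ∈ A | m v = 0} := by
    rw [hνeq, hgen]
    exact face_coneHull_eq hmA
  obtain ⟨u, hu, hune⟩ : ∃ u, u ∈ {v ∈ A | m v = 0} ∧ u ≠ 0 := by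
    by_contra hc
    push_neg at hc
    have hsub : ν ⊆ {0} := by
      rw [hν2]; exact coneHull_zero_subset hc
    have : coneDim ν = 0 := by
      have hle : Submodule.span ℚ ν ≤ ⊥ :=
        Submodule.span_le.mpr fun x hx => by simpa using hsub hx
      rw [coneDim, le_bot_iff.mp hle]
      exact finrank_bot ℚ (V n)
    omega
  have humem : u ∈ ν := by rw [hν2]; exact mem_coneHull_self hu
  have hray : ν = raySet u := ray_eq_raySet hτ hsc ⟨m, hm, hνeq⟩ hdim humem hune
  rcases hu.1 with huξ | huE
  · left
    have hξpoly : IsPolyCone ξ := hξ.isPolyCone hτ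
    obtain ⟨T, hT⟩ := hξpoly
    refine ⟨m, fun x hx => hm x (hξ.subset hx), ?_⟩
    ext x
    constructor
    · intro hx
      have hx' : x ∈ raySet u := by rw [← hray]; exact hx
      obtain ⟨t, ht, rfl⟩ := hx'
      refine ⟨?_, by rw [hνeq] at hx; exact hx.2⟩
      rw [hT]
      exact smul_mem_coneHull (by rw [← hT]; exact huξ) ht
    · rintro ⟨hxξ, hx0⟩
      rw [hνeq]
      exact ⟨hξ.subset hxξ, hx0⟩
  · right
    obtain ⟨e, heE, hue⟩ := huE
    obtain ⟨w, hw, hwne, hwray⟩ := hE e heE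
    rw [hwray] at hue
    obtain ⟨t, ht, rfl⟩ := hue
    have ht' : 0 < t := lt_of_le_of_ne ht (by rintro rfl; simp at hune)
    rw [hray, raySet_smul ht', ← hwray]
    exact heE

lemma face_eq_self_of_span {τ ξ : Set (V n)} (hξ : IsFaceOf ξ τ)
    (hspan : Submodule.span ℚ ξ = Submodule.span ℚ τ) : ξ = τ := by
  obtain ⟨m, hm, rfl⟩ := hξ
  apply Set.Subset.antisymm (fun x hx => hx.1)
  intro x hx
  refine ⟨hx, ?_⟩
  have hker : Submodule.span ℚ {x ∈ τ | m x = 0} ≤ LinearMap.ker m :=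
    Submodule.span_le.mpr fun y hy => by simpa [LinearMap.mem_ker] using hy.2
  have hxs : x ∈ Submodule.span ℚ {x ∈ τ | m x = 0} := by
    rw [hspan]; exact Submodule.subset_span hx
  simpa [LinearMap.mem_ker] using hker hxs

/-- Choice of a nonzero element of a set, when one exists. -/
noncomputable def pick (e : Set (V n)) : V n :=
  letI := Classical.dec (∃ u, u ∈ e ∧ u ≠ 0)
  if h : ∃ u, u ∈ e ∧ u ≠ 0 then h.choose else 0

lemma pick_spec {e : Set (V n)} (h : ∃ u, u ∈ e ∧ u ≠ 0) : pick e ∈ e ∧ pick e ≠ 0 := by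
  unfold pick
  rw [dif_pos h]
  exact h.choose_spec

end Aux

/-- For an affine fan quadruple with `τ = Cone(ξ, E)`, `X` being `E`-simplicial,
sortedness is equivalent to sortedness of the restriction to the faces of `ξ`. -/
theorem sorted_iff_sorted_of_ESimplicial_extension {n : ℕ} (τ ξ : Set (V n))
    (B C H Bs Cf Hs E : Set (Set (V n)))
    (hτ : IsPolyCone τ) (hsc : StronglyConvex τ)
    (hQ : IsQuadData (faces τ) B C H)
    (hBs : Bs ⊆ B) (hCf : Cf ⊆ C) (hHs : Hs ⊆ H)
    (hE : E ⊆ raysOf τ) (hEsimp : ESimplicialOn (faces τ) E)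
    (hξ : IsFaceOf ξ τ) (hgen : τ = coneHull (ξ ∪ ⋃₀ E))
    (hdim : coneDim ξ + E.ncard = coneDim τ) :
    SortedOn (faces τ) B C H Bs Cf Hs ↔
      SortedOn (faces ξ) (B ∩ faces ξ) (C ∩ faces ξ) (H ∩ faces ξ)
        (Bs ∩ faces ξ) (Cf ∩ faces ξ) (Hs ∩ faces ξ) := by
  classical
  have hξpoly : IsPolyCone ξ := hξ.isPolyCone hτ
  constructor
  · -- forward direction
    intro hsort σ hσmem hun
    have hσξ : IsFaceOf σ ξ := hσmem
    have hστ : IsFaceOf σ τ := IsFaceOf.trans hτ hσξ hξ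
    have hun' : Unsettled ((B \ Bs) ∪ (H \ Hs)) σ := by
      intro ν hν hmem
      have hνξ : IsFaceOf ν ξ := IsFaceOf.trans hξpoly hν.1 hσξ
      have hνF : ν ∈ faces ξ := hνξ
      rcases hmem with h | h
      · exact hun ν hν (Or.inl ⟨⟨h.1, hνF⟩, fun hc => h.2 hc.1⟩)
      · exact hun ν hν (Or.inr ⟨⟨h.1, hνF⟩, fun hc => h.2 hc.1⟩)
    obtain ⟨ρ, ⟨hρ1, hρ2, hρ3⟩, hρ4⟩ := hsort σ hστ hun'
    refine ⟨ρ, ⟨?_, ?_, ?_⟩, ?_⟩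
    · intro ν hν hmem x hx
      exact hρ1 ν hν hmem.1 x hx
    · intro ν hν hmem x hx
      exact hρ2 ν hν hmem.1 x hx
    · intro ν hν h1 h2 h3 x hx
      have hνF : ν ∈ faces ξ := IsFaceOf.trans hξpoly hν.1 hσξ
      exact hρ3 ν hν (fun hB => h1 ⟨hB, hνF⟩) (fun hC => h2 ⟨hC, hνF⟩)
        (fun hH => h3 ⟨hH, hνF⟩) x hx
    · intro ν hν hmem x hx hxne
      exact hρ4 ν hν hmem.1 x hx hxne
  · -- backward direction
    intro hsort σ hσmem hun
    have hστ : IsFaceOf σ τ := hσmem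
    obtain ⟨m₁, hm₁, hσeq⟩ := hστ
    obtain ⟨m₀, hm₀, hξeq⟩ := id hξ
    have hσsub : σ ⊆ τ := by rw [hσeq]; exact fun x hx => hx.1
    have hσpoly : IsPolyCone σ := IsFaceOf.isPolyCone ⟨m₁, hm₁, hσeq⟩ hτ
    set σξ := σ ∩ ξ with hσξdef
    have hσξ_faces_ξ : IsFaceOf σξ ξ := by
      refine ⟨m₁, fun x hx => hm₁ x (hξ.subset hx), ?_⟩
      ext x
      constructor
      · rintro ⟨hxσ, hxξ⟩
        have : x ∈ {x ∈ τ | m₁ x = 0} := by rw [← hσeq]; exact hxσ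
        exact ⟨hxξ, this.2⟩
      · rintro ⟨hxξ, h0⟩
        exact ⟨by rw [hσeq]; exact ⟨hξ.subset hxξ, h0⟩, hxξ⟩
    have hσξ_face_σ : IsFaceOf σξ σ := by
      refine ⟨m₀, fun x hx => hm₀ x (hσsub hx), ?_⟩
      ext x
      constructor
      · rintro ⟨hxσ, hxξ⟩
        have : x ∈ {x ∈ τ | m₀ x = 0} := by rw [← hξeq]; exact hxξ
        exact ⟨hxσ, this.2⟩
      · rintro ⟨hxσ, h0⟩
        exact ⟨hxσ, by rw [hξeq]; exact ⟨hσsub hxσ, h0⟩⟩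
    have hun' : Unsettled (((B ∩ faces ξ) \ (Bs ∩ faces ξ)) ∪
        ((H ∩ faces ξ) \ (Hs ∩ faces ξ))) σξ := by
      intro ν hν hmem
      have hνσ : IsFaceOf ν σ := IsFaceOf.trans hσpoly hν.1 hσξ_face_σ
      rcases hmem with h | h
      · exact hun ν ⟨hνσ, hν.2⟩ (Or.inl ⟨h.1.1, fun hc => h.2 ⟨hc, h.1.2⟩⟩)
      · exact hun ν ⟨hνσ, hν.2⟩ (Or.inr ⟨h.1.1, fun hc => h.2 ⟨hc, h.1.2⟩⟩)
    obtain ⟨ρ', ⟨hρ1, hρ2, hρ3⟩, hρ4⟩ := hsort σξ hσξ_faces_ξ hun'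
    -- facts about the rays in E
    have hEfacts : ∀ e ∈ E, pick e ∈ e ∧ pick e ≠ 0 ∧ e = raySet (pick e) := by
      intro e he
      have hre : IsRayOf e τ := hE he
      have hex : ∃ u, u ∈ e ∧ u ≠ 0 :=
        exists_ne_zero_of_coneDim_ne_zero (by rw [hre.2]; exact one_ne_zero)
      obtain ⟨h1, h2⟩ := pick_spec hex
      exact ⟨h1, h2, ray_eq_raySet hτ hsc hre.1 hre.2 h1 h2⟩
    -- construct the extended sorting function
    obtain ⟨ρ, hagree, hEcase⟩ : ∃ ρ : (V n) →ₗ[ℚ] ℚ,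
        (∀ x ∈ ξ, ρ x = ρ' x) ∧
        (∀ ν, IsRayOf ν σ → ¬ IsFaceOf ν ξ → ν ∈ E ∧
          ∀ x ∈ ν, ∃ t : ℚ, 0 ≤ t ∧ x = t • pick ν ∧
            ρ x = t * (if ν ∈ Cf then (-1 : ℚ) else 0)) := by
      by_cases hEfin : E.Finite
      · -- main case: E finite
        set U := Submodule.span ℚ ξ with hUdef
        set VE := pick '' E with hVEdef
        set W := Submodule.span ℚ VE with hWdef
        have hspanE : Submodule.span ℚ (⋃₀ E) = W := by
          apply le_antisymm
          · rw [Submodule.span_le]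
            rintro x ⟨e, heE, hxe⟩
            rw [(hEfacts e heE).2.2] at hxe
            obtain ⟨t, ht, rfl⟩ := hxe
            exact Submodule.smul_mem _ _ (Submodule.subset_span ⟨e, heE, rfl⟩)
          · rw [Submodule.span_le]
            rintro x ⟨e, heE, rfl⟩
            exact Submodule.subset_span ⟨e, heE, (hEfacts e heE).1⟩
        have hspanτ : Submodule.span ℚ τ = U ⊔ W := by
          rw [hgen, span_coneHull, Submodule.span_union, hspanE]
        haveI : Fintype VE := (hEfin.image pick).fintype
        have hVEcard : VE.ncard = E.ncard := by
          apply Set.ncard_image_of_injOn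
          intro e he e' he' hpe
          rw [(hEfacts e he).2.2, hpe, ← (hEfacts e' he').2.2]
        have hfinW : Module.finrank ℚ W ≤ E.ncard := by
          have h1 : Module.finrank ℚ W ≤ VE.toFinset.card := finrank_span_le_card VE
          have h2 : VE.toFinset.card = VE.ncard := (Set.ncard_eq_toFinset_card' VE).symm
          omega
        have hsum := Submodule.finrank_sup_add_finrank_inf_eq U W
        have hUτ : Module.finrank ℚ ↥(U ⊔ W) = Module.finrank ℚ ↥U + E.ncard := by
          rw [← hspanτ]
          rw [coneDim, coneDim, ← hUdef] at hdim
          omega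
        have hinf0 : Module.finrank ℚ ↥(U ⊓ W) = 0 := by omega
        have hWrank : Module.finrank ℚ ↥W = E.ncard := by omega
        have hinf : U ⊓ W = ⊥ := Submodule.finrank_eq_zero.mp hinf0
        have hdisj : Disjoint U W := disjoint_iff.mpr hinf
        -- VE is linearly independent
        have hVEindep : LinearIndependent ℚ ((↑) : VE → V n) := by
          rw [linearIndependent_iff_card_eq_finrank_span]
          have hcard : Fintype.card VE = VE.ncard := by
            rw [← Nat.card_coe_set_eq, Nat.card_eq_fintype_card]
          rw [hcard, Subtype.range_coe]
          show VE.ncard = Module.finrank ℚ (Submodule.span ℚ VE)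
          rw [← hWdef, hWrank, hVEcard]
        -- a basis of U, as a set in V n
        let bU := Module.finBasis ℚ U
        set s₁ : Set (V n) := Set.range (fun i => (bU i : V n)) with hs₁def
        have hs₁span : Submodule.span ℚ s₁ = U := by
          have h1 : s₁ = (U.subtype) '' Set.range bU := by
            rw [← Set.range_comp]; rfl
          rw [h1, Submodule.span_image, bU.span_eq, Submodule.map_top,
            Submodule.range_subtype]
        have hs₁indep : LinearIndependent ℚ ((↑) : s₁ → V n) :=
          (bU.linearIndependent.map' U.subtype (Submodule.ker_subtype U)).linearIndepOn_id
        have hs₁U : s₁ ⊆ (U : Set (V n)) := by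
          rintro x ⟨i, rfl⟩; exact (bU i).2
        have hsindep : LinearIndepOn ℚ id (s₁ ∪ VE) :=
          LinearIndepOn.id_union hs₁indep hVEindep (by rw [hs₁span, ← hWdef]; exact hdisj)
        set bV := Module.Basis.extend hsindep with hbVdef
        set g : V n → ℚ := fun w =>
          if w ∈ VE then (if raySet w ∈ Cf then (-1 : ℚ) else 0) else ρ' w with hgdef
        set ρ : (V n) →ₗ[ℚ] ℚ := bV.constr ℚ (fun i => g ↑i) with hρdef
        have hρbasis : ∀ w, ∀ hw : w ∈ hsindep.extend (Set.subset_univ _), ρ w = g w := by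
          intro w hw
          have h1 : bV ⟨w, hw⟩ = w := Module.Basis.extend_apply_self hsindep ⟨w, hw⟩
          have h2 : ρ (bV ⟨w, hw⟩) = g w := bV.constr_basis ℚ (fun i => g ↑i) ⟨w, hw⟩
          rw [h1] at h2
          exact h2
        have hρVE : ∀ e ∈ E, ρ (pick e) = if e ∈ Cf then (-1 : ℚ) else 0 := by
          intro e he
          have hwve : pick e ∈ VE := ⟨e, he, rfl⟩
          have hmem : pick e ∈ hsindep.extend (Set.subset_univ _) :=
            hsindep.subset_extend _ (Or.inr hwve)
          rw [hρbasis _ hmem]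
          show (if pick e ∈ VE then (if raySet (pick e) ∈ Cf then (-1 : ℚ) else 0)
            else ρ' (pick e)) = _
          rw [if_pos hwve, ← (hEfacts e he).2.2]
        have hρU : ∀ x ∈ ξ, ρ x = ρ' x := by
          have hker : U ≤ LinearMap.ker (ρ - ρ') := by
            rw [← hs₁span, Submodule.span_le]
            intro w hw
            have hwU : w ∈ U := hs₁U hw
            have hwnotVE : w ∉ VE := by
              intro hcon
              have hwW : w ∈ W := Submodule.subset_span hcon
              have hw0 : w = 0 := by
                have := Submodule.mem_inf.mpr ⟨hwU, hwW⟩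
                rw [hinf] at this
                simpa using this
              obtain ⟨i, hival⟩ := hw
              apply bU.ne_zero i
              apply Subtype.coe_injective
              rw [hival, hw0]
              rfl
            have hmem : w ∈ hsindep.extend (Set.subset_univ _) :=
              hsindep.subset_extend _ (Or.inl hw)
            have hval : ρ w = ρ' w := by
              rw [hρbasis _ hmem]
              show (if w ∈ VE then _ else ρ' w) = ρ' w
              rw [if_neg hwnotVE]
            simp [LinearMap.mem_ker, LinearMap.sub_apply, hval]
          intro x hx
          have h0 : (ρ - ρ') x = 0 := hker (Submodule.subset_span hx)
          rw [LinearMap.sub_apply] at h0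
          linarith
        refine ⟨ρ, hρU, ?_⟩
        intro ν hν hnface
        have hντ : IsRayOf ν τ := ⟨IsFaceOf.trans hτ hν.1 hσmem, hν.2⟩
        have hνE : ν ∈ E := by
          rcases ray_cases hτ hsc hξ hgen
            (fun e he => ⟨pick e, (hEfacts e he).1, (hEfacts e he).2.1,
              (hEfacts e he).2.2⟩) hντ with h | h
          · exact absurd h hnface
          · exact h
        refine ⟨hνE, ?_⟩
        intro x hx
        have hx' : x ∈ raySet (pick ν) := by
          rw [← (hEfacts ν hνE).2.2]; exact hx
        obtain ⟨t, ht, rfl⟩ := hx'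
        exact ⟨t, ht, rfl, by rw [map_smul, smul_eq_mul, hρVE ν hνE]⟩
      · -- degenerate case: E infinite, so ξ = τ
        have hncard : E.ncard = 0 := Set.Infinite.ncard hEfin
        have hle : Submodule.span ℚ ξ ≤ Submodule.span ℚ τ :=
          Submodule.span_mono hξ.subset
        have hfr : Module.finrank ℚ (Submodule.span ℚ τ) ≤
            Module.finrank ℚ (Submodule.span ℚ ξ) := by
          rw [coneDim, coneDim] at hdim
          omega
        have hspan : Submodule.span ℚ ξ = Submodule.span ℚ τ :=
          Submodule.eq_of_le_of_finrank_le hle hfr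
        have hξτ : ξ = τ := face_eq_self_of_span hξ hspan
        refine ⟨ρ', fun x _ => rfl, ?_⟩
        intro ν hν hnface
        exfalso
        apply hnface
        rw [hξτ]
        exact IsFaceOf.trans hτ hν.1 hσmem
    -- dichotomy for rays of σ
    have hrayσξ : ∀ ν, IsRayOf ν σ → IsFaceOf ν ξ → IsRayOf ν σξ := by
      intro ν hν hνξ
      obtain ⟨m₂, hm₂, hνeq⟩ := hν.1
      refine ⟨⟨m₂, fun x hx => hm₂ x hx.1, ?_⟩, hν.2⟩
      rw [hνeq]
      ext x
      constructor
      · rintro ⟨hxσ, hx0⟩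
        have hxν : x ∈ ν := by rw [hνeq]; exact ⟨hxσ, hx0⟩
        exact ⟨⟨hxσ, hνξ.subset hxν⟩, hx0⟩
      · rintro ⟨⟨hxσ, _⟩, hx0⟩
        exact ⟨hxσ, hx0⟩
    have hνface : ∀ ν, IsRayOf ν σ → IsFaceOf ν ξ → ν ∈ faces ξ := fun ν _ h => h
    refine ⟨ρ, ⟨?_, ?_, ?_⟩, ?_⟩
    · intro ν hν hB x hx
      by_cases hface : IsFaceOf ν ξ
      · rw [hagree x (hface.subset hx)]
        exact hρ1 ν (hrayσξ ν hν hface) ⟨hB, hface⟩ x hx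
      · obtain ⟨hνE, hval⟩ := hEcase ν hν hface
        obtain ⟨t, ht, rfl, hρx⟩ := hval x hx
        rw [hρx]
        have hnotCf : ν ∉ Cf := fun hc =>
          Set.disjoint_left.mp hQ.2.2.2.1 hB (hCf hc)
        rw [if_neg hnotCf, mul_zero]
    · intro ν hν hC x hx
      by_cases hface : IsFaceOf ν ξ
      · rw [hagree x (hface.subset hx)]
        exact hρ2 ν (hrayσξ ν hν hface) ⟨hC, hface⟩ x hx
      · obtain ⟨hνE, hval⟩ := hEcase ν hν hface
        obtain ⟨t, ht, rfl, hρx⟩ := hval x hx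
        rw [hρx]
        split_ifs with h
        · nlinarith
        · simp
    · intro ν hν hB hC hH x hx
      by_cases hface : IsFaceOf ν ξ
      · rw [hagree x (hface.subset hx)]
        exact hρ3 ν (hrayσξ ν hν hface) (fun h => hB h.1) (fun h => hC h.1)
          (fun h => hH h.1) x hx
      · obtain ⟨hνE, hval⟩ := hEcase ν hν hface
        obtain ⟨t, ht, rfl, hρx⟩ := hval x hx
        rw [hρx, if_neg (fun hc => hC (hCf hc)), mul_zero]
    · intro ν hν hCf' x hx hxne
      by_cases hface : IsFaceOf ν ξ
      · rw [hagree x (hface.subset hx)]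
        exact hρ4 ν (hrayσξ ν hν hface) ⟨hCf', hface⟩ x hx hxne
      · obtain ⟨hνE, hval⟩ := hEcase ν hν hface
        obtain ⟨t, ht, rfl, hρx⟩ := hval x hx
        have ht' : 0 < t := lt_of_le_of_ne ht (by rintro rfl; simp at hxne)
        rw [hρx, if_pos hCf']
        nlinarith

end ToricPaper
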